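/- arXiv:2502.10192 — 6 statements merged into one kernel-verified Lean document; each statement's English description precedes it below -/
import Mathlib

section
/- Let n be even, and let A, B, C : F_2^n → F_2 be Boolean functions. Define f : F_2^n × F_2 × F_2 → F_2 by f(x, x_{n+1}, x_{n+2}) = AB ⊕ AC ⊕ BC ⊕ x_{n+1}x_{n+2} ⊕ (A⊕B)x_{n+1} ⊕ (A⊕C)x_{n+2} (all functions evaluated at x). Then for all u ∈ F_2^n: W_f(u,0,0) = 2·W_A(u), W_f(u,0,1) = 2·W_B(u), W_f(u,1,0) = 2·W_C(u), and W_f(u,1,1) = −2·W_{A⊕B⊕C}(u). -/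
open Finset

/-- Walsh–Hadamard transform of a Boolean function on `F_2^n`. -/
def walsh {n : ℕ} (g : (Fin n → ZMod 2) → ZMod 2) (u : Fin n → ZMod 2) : ℤ :=
  ∑ x : Fin n → ZMod 2, (-1 : ℤ) ^ (g x + ∑ i, u i * x i).val

/-- Bentness: `|W_g(u)| = 2^(n/2)` for all `u`. -/
def IsBent {n : ℕ} (g : (Fin n → ZMod 2) → ZMod 2) : Prop :=
  ∀ u, |walsh g u| = 2 ^ (n / 2)

/-- Walsh transform of a Boolean function on `F_2^n × F_2 × F_2`. -/
def walsh2 {n : ℕ} (g : (Fin n → ZMod 2) → ZMod 2 → ZMod 2 → ZMod 2)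
    (u : Fin n → ZMod 2) (u1 u2 : ZMod 2) : ℤ :=
  ∑ x : Fin n → ZMod 2, ∑ x1 : ZMod 2, ∑ x2 : ZMod 2,
    (-1 : ℤ) ^ (g x x1 x2 + (∑ i, u i * x i) + u1 * x1 + u2 * x2).val

/-- Bentness on `n+2` variables (`n` even): `|W(u)| = 2^((n+2)/2) = 2^(n/2+1)`. -/
def IsBent2 {n : ℕ} (g : (Fin n → ZMod 2) → ZMod 2 → ZMod 2 → ZMod 2) : Prop :=
  ∀ u u1 u2, |walsh2 g u u1 u2| = 2 ^ (n / 2 + 1)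

/-- Walsh transform of a Boolean function on `F_2^n × F_2^4`. -/
def walsh4 {n : ℕ} (g : (Fin n → ZMod 2) → ZMod 2 → ZMod 2 → ZMod 2 → ZMod 2 → ZMod 2)
    (u : Fin n → ZMod 2) (u1 u2 u3 u4 : ZMod 2) : ℤ :=
  ∑ x : Fin n → ZMod 2, ∑ x1 : ZMod 2, ∑ x2 : ZMod 2, ∑ x3 : ZMod 2, ∑ x4 : ZMod 2,
    (-1 : ℤ) ^ (g x x1 x2 x3 x4 + (∑ i, u i * x i)
      + u1 * x1 + u2 * x2 + u3 * x3 + u4 * x4).val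

/-- Bentness on `n+4` variables (`n` even). -/
def IsBent4 {n : ℕ} (g : (Fin n → ZMod 2) → ZMod 2 → ZMod 2 → ZMod 2 → ZMod 2 → ZMod 2) : Prop :=
  ∀ u u1 u2 u3 u4, |walsh4 g u u1 u2 u3 u4| = 2 ^ (n / 2 + 2)

/-- Walsh transform of a Boolean function on `F_2^n × F_2^m`. -/
def walshP {n m : ℕ} (g : (Fin n → ZMod 2) → (Fin m → ZMod 2) → ZMod 2)
    (u : Fin n → ZMod 2) (v : Fin m → ZMod 2) : ℤ :=
  ∑ x : Fin n → ZMod 2, ∑ y : Fin m → ZMod 2,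
    (-1 : ℤ) ^ (g x y + (∑ i, u i * x i) + (∑ j, v j * y j)).val

lemma aux00 : ∀ a b c s : ZMod 2,
    ∑ x1 : ZMod 2, ∑ x2 : ZMod 2,
      (-1 : ℤ) ^ ((a*b + a*c + b*c + x1*x2 + (a+b)*x1 + (a+c)*x2) + s + 0*x1 + 0*x2).val
      = 2 * (-1 : ℤ) ^ (a + s).val := by decide

lemma aux01 : ∀ a b c s : ZMod 2,
    ∑ x1 : ZMod 2, ∑ x2 : ZMod 2,
      (-1 : ℤ) ^ ((a*b + a*c + b*c + x1*x2 + (a+b)*x1 + (a+c)*x2) + s + 0*x1 + 1*x2).val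
      = 2 * (-1 : ℤ) ^ (b + s).val := by decide

lemma aux10 : ∀ a b c s : ZMod 2,
    ∑ x1 : ZMod 2, ∑ x2 : ZMod 2,
      (-1 : ℤ) ^ ((a*b + a*c + b*c + x1*x2 + (a+b)*x1 + (a+c)*x2) + s + 1*x1 + 0*x2).val
      = 2 * (-1 : ℤ) ^ (c + s).val := by decide

lemma aux11 : ∀ a b c s : ZMod 2,
    ∑ x1 : ZMod 2, ∑ x2 : ZMod 2,
      (-1 : ℤ) ^ ((a*b + a*c + b*c + x1*x2 + (a+b)*x1 + (a+c)*x2) + s + 1*x1 + 1*x2).val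
      = -2 * (-1 : ℤ) ^ (a + b + c + s).val := by decide

theorem stmt5 {n : ℕ} (hn : Even n) (A B C : (Fin n → ZMod 2) → ZMod 2)
    (u : Fin n → ZMod 2) :
    walsh2 (fun x x1 x2 => A x * B x + A x * C x + B x * C x + x1 * x2 + (A x + B x) * x1 + (A x + C x) * x2) u 0 0 = 2 * walsh A u ∧
    walsh2 (fun x x1 x2 => A x * B x + A x * C x + B x * C x + x1 * x2 + (A x + B x) * x1 + (A x + C x) * x2) u 0 1 = 2 * walsh B u ∧
    walsh2 (fun x x1 x2 => A x * B x + A x * C x + B x * C x + x1 * x2 + (A x + B x) * x1 + (A x + C x) * x2) u 1 0 = 2 * walsh C u ∧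
    walsh2 (fun x x1 x2 => A x * B x + A x * C x + B x * C x + x1 * x2 + (A x + B x) * x1 + (A x + C x) * x2) u 1 1 =
      -2 * walsh (fun x => A x + B x + C x) u := by
  unfold walsh2 walsh
  refine ⟨?_, ?_, ?_, ?_⟩ <;> rw [mul_sum]
  · exact Finset.sum_congr rfl fun x _ => aux00 (A x) (B x) (C x) _
  · exact Finset.sum_congr rfl fun x _ => aux01 (A x) (B x) (C x) _
  · exact Finset.sum_congr rfl fun x _ => aux10 (A x) (B x) (C x) _
  · exact Finset.sum_congr rfl fun x _ => aux11 (A x) (B x) (C x) _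
end

section
/- Let n be a positive even integer and A, B, C : F_2^n → F_2 Boolean functions. The function f on F_2^{n+2} defined by f(x, x_{n+1}, x_{n+2}) = A(x)B(x) ⊕ A(x)C(x) ⊕ B(x)C(x) ⊕ x_{n+1}x_{n+2} ⊕ (A(x)⊕B(x))x_{n+1} ⊕ (A(x)⊕C(x))x_{n+2} is bent if and only if A, B, C and A⊕B⊕C are all bent. -/
open Finset

section aux6

lemma key6 : ∀ e a b : ZMod 2,
    (∑ x1 : ZMod 2, ∑ x2 : ZMod 2, (-1:ℤ)^(e + x1*x2 + a*x1 + b*x2).val)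
      = 2 * (-1:ℤ)^(e+a*b).val := by decide

lemma exp_simp6 : ∀ a b c s u1 u2 : ZMod 2,
    (a*b + a*c + b*c + s) + (a+b+u1)*(a+c+u2)
      = s + a + a*u1 + a*u2 + b*u2 + c*u1 + u1*u2 := by decide

lemma W2aux {n : ℕ} (A B C : (Fin n → ZMod 2) → ZMod 2) (u : Fin n → ZMod 2) (u1 u2 : ZMod 2) :
    walsh2 (fun x x1 x2 => A x * B x + A x * C x + B x * C x + x1 * x2 + (A x + B x) * x1 + (A x + C x) * x2) u u1 u2
      = 2 * ∑ x : Fin n → ZMod 2,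
          (-1:ℤ)^((∑ i, u i * x i) + A x + A x * u1 + A x * u2 + B x * u2 + C x * u1 + u1 * u2).val := by
  unfold walsh2
  rw [Finset.mul_sum]
  refine Finset.sum_congr rfl fun x _ => ?_
  have h1 : ∀ x1 x2 : ZMod 2,
      (A x * B x + A x * C x + B x * C x + x1 * x2 + (A x + B x) * x1 + (A x + C x) * x2
        + (∑ i, u i * x i) + u1 * x1 + u2 * x2)
      = ((A x * B x + A x * C x + B x * C x + (∑ i, u i * x i)) + x1 * x2
        + (A x + B x + u1) * x1 + (A x + C x + u2) * x2) := by
    intro x1 x2; ring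
  simp only [h1]
  rw [key6, exp_simp6 (A x) (B x) (C x) (∑ i, u i * x i) u1 u2]

lemma W00 {n : ℕ} (A B C : (Fin n → ZMod 2) → ZMod 2) (u : Fin n → ZMod 2) :
    walsh2 (fun x x1 x2 => A x * B x + A x * C x + B x * C x + x1 * x2 + (A x + B x) * x1 + (A x + C x) * x2) u 0 0
      = 2 * walsh A u := by
  rw [W2aux]
  unfold walsh
  congr 1
  refine Finset.sum_congr rfl fun x _ => ?_
  congr 2
  have h : ∀ a b c s : ZMod 2, s + a + a*0 + a*0 + b*0 + c*0 + 0*0 = a + s := by decide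
  exact h (A x) (B x) (C x) _

lemma W01 {n : ℕ} (A B C : (Fin n → ZMod 2) → ZMod 2) (u : Fin n → ZMod 2) :
    walsh2 (fun x x1 x2 => A x * B x + A x * C x + B x * C x + x1 * x2 + (A x + B x) * x1 + (A x + C x) * x2) u 0 1
      = 2 * walsh B u := by
  rw [W2aux]
  unfold walsh
  congr 1
  refine Finset.sum_congr rfl fun x _ => ?_
  congr 2
  have h : ∀ a b c s : ZMod 2, s + a + a*0 + a*1 + b*1 + c*0 + 0*1 = b + s := by decide
  exact h (A x) (B x) (C x) _

lemma W10 {n : ℕ} (A B C : (Fin n → ZMod 2) → ZMod 2) (u : Fin n → ZMod 2) :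
    walsh2 (fun x x1 x2 => A x * B x + A x * C x + B x * C x + x1 * x2 + (A x + B x) * x1 + (A x + C x) * x2) u 1 0
      = 2 * walsh C u := by
  rw [W2aux]
  unfold walsh
  congr 1
  refine Finset.sum_congr rfl fun x _ => ?_
  congr 2
  have h : ∀ a b c s : ZMod 2, s + a + a*1 + a*0 + b*0 + c*1 + 1*0 = c + s := by decide
  exact h (A x) (B x) (C x) _

lemma negexp6 : ∀ e : ZMod 2, (-1:ℤ)^(e+(1:ZMod 2)).val = -(-1:ℤ)^e.val := by decide

lemma W11 {n : ℕ} (A B C : (Fin n → ZMod 2) → ZMod 2) (u : Fin n → ZMod 2) :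
    walsh2 (fun x x1 x2 => A x * B x + A x * C x + B x * C x + x1 * x2 + (A x + B x) * x1 + (A x + C x) * x2) u 1 1
      = -(2 * walsh (fun x => A x + B x + C x) u) := by
  rw [W2aux]
  unfold walsh
  have h : ∀ x : Fin n → ZMod 2,
      (-1:ℤ)^((∑ i, u i * x i) + A x + A x * 1 + A x * 1 + B x * 1 + C x * 1 + 1 * 1).val
        = -(-1:ℤ)^((A x + B x + C x) + ∑ i, u i * x i).val := by
    intro x
    have he : ∀ a b c s : ZMod 2, s + a + a*1 + a*1 + b*1 + c*1 + 1*1 = (a+b+c+s)+1 := by decide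
    rw [he (A x) (B x) (C x), negexp6]
  simp only [h, Finset.sum_neg_distrib, mul_neg]

end aux6

theorem stmt6 {n : ℕ} (hn : Even n) (hp : 0 < n)
    (A B C : (Fin n → ZMod 2) → ZMod 2) :
    IsBent2 (fun x x1 x2 => A x * B x + A x * C x + B x * C x + x1 * x2 + (A x + B x) * x1 + (A x + C x) * x2) ↔
      (IsBent A ∧ IsBent B ∧ IsBent C ∧ IsBent (fun x => A x + B x + C x)) := by
  constructor
  · intro hf
    refine ⟨?_, ?_, ?_, ?_⟩
    · intro u
      have h := hf u 0 0
      rw [W00 A B C u, abs_mul, pow_succ] at h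
      simp only [abs_two] at h
      linarith
    · intro u
      have h := hf u 0 1
      rw [W01 A B C u, abs_mul, pow_succ] at h
      simp only [abs_two] at h
      linarith
    · intro u
      have h := hf u 1 0
      rw [W10 A B C u, abs_mul, pow_succ] at h
      simp only [abs_two] at h
      linarith
    · intro u
      have h := hf u 1 1
      rw [W11 A B C u, abs_neg, abs_mul, pow_succ] at h
      simp only [abs_two] at h
      linarith
  · rintro ⟨hA, hB, hC, hD⟩ u u1 u2
    rw [pow_succ]
    have h2 : ∀ v : ZMod 2, v = 0 ∨ v = 1 := by decide
    rcases h2 u1 with h1 | h1 <;> rcases h2 u2 with h3 | h3 <;> subst h1 <;> subst h3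
    · rw [W00 A B C u, abs_mul, abs_two, hA u]; ring
    · rw [W01 A B C u, abs_mul, abs_two, hB u]; ring
    · rw [W10 A B C u, abs_mul, abs_two, hC u]; ring
    · rw [W11 A B C u, abs_neg, abs_mul, abs_two, hD u]; ring
end

section
/- (Rothaus' construction, sufficiency.) Let n be even and A, B, C : F_2^n → F_2 bent functions such that A⊕B⊕C is also bent. Then f(x, x_{n+1}, x_{n+2}) = AB ⊕ AC ⊕ BC ⊕ x_{n+1}x_{n+2} ⊕ (A⊕B)x_{n+1} ⊕ (A⊕C)x_{n+2} (with A, B, C evaluated at x) is a bent function on F_2^{n+2}. -/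
open Finset

lemma zmod2_cases (z : ZMod 2) : z = 0 ∨ z = 1 := by revert z; decide

lemma L00 : ∀ a b c d : ZMod 2,
    (∑ x1 : ZMod 2, ∑ x2 : ZMod 2,
      (-1:ℤ)^((a*b+a*c+b*c + x1*x2 + (a+b)*x1 + (a+c)*x2 + d + 0*x1 + 0*x2).val))
    = 2 * (-1)^((a+d).val) := by decide

lemma L10 : ∀ a b c d : ZMod 2,
    (∑ x1 : ZMod 2, ∑ x2 : ZMod 2,
      (-1:ℤ)^((a*b+a*c+b*c + x1*x2 + (a+b)*x1 + (a+c)*x2 + d + 1*x1 + 0*x2).val))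
    = 2 * (-1)^((c+d).val) := by decide

lemma L01 : ∀ a b c d : ZMod 2,
    (∑ x1 : ZMod 2, ∑ x2 : ZMod 2,
      (-1:ℤ)^((a*b+a*c+b*c + x1*x2 + (a+b)*x1 + (a+c)*x2 + d + 0*x1 + 1*x2).val))
    = 2 * (-1)^((b+d).val) := by decide

lemma L11 : ∀ a b c d : ZMod 2,
    (∑ x1 : ZMod 2, ∑ x2 : ZMod 2,
      (-1:ℤ)^((a*b+a*c+b*c + x1*x2 + (a+b)*x1 + (a+c)*x2 + d + 1*x1 + 1*x2).val))
    = -2 * (-1)^((a+b+c+d).val) := by decide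

theorem stmt7 {n : ℕ} (hn : Even n)
    (A B C : (Fin n → ZMod 2) → ZMod 2)
    (hA : IsBent A) (hB : IsBent B) (hC : IsBent C)
    (hABC : IsBent (fun x => A x + B x + C x)) :
    IsBent2 (fun x x1 x2 => A x * B x + A x * C x + B x * C x + x1 * x2 + (A x + B x) * x1 + (A x + C x) * x2) := by
  intro u u1 u2
  rcases zmod2_cases u1 with h1 | h1 <;> rcases zmod2_cases u2 with h2 | h2 <;>
    subst h1 <;> subst h2
  · have h : walsh2 (fun x x1 x2 => A x * B x + A x * C x + B x * C x + x1 * x2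
        + (A x + B x) * x1 + (A x + C x) * x2) u 0 0 = 2 * walsh A u := by
      unfold walsh2 walsh
      rw [Finset.mul_sum]
      exact Finset.sum_congr rfl fun x _ => L00 (A x) (B x) (C x) (∑ i, u i * x i)
    rw [h, abs_mul, hA u, pow_succ]
    norm_num [mul_comm]
  · have h : walsh2 (fun x x1 x2 => A x * B x + A x * C x + B x * C x + x1 * x2
        + (A x + B x) * x1 + (A x + C x) * x2) u 0 1 = 2 * walsh B u := by
      unfold walsh2 walsh
      rw [Finset.mul_sum]
      exact Finset.sum_congr rfl fun x _ => L01 (A x) (B x) (C x) (∑ i, u i * x i)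
    rw [h, abs_mul, hB u, pow_succ]
    norm_num [mul_comm]
  · have h : walsh2 (fun x x1 x2 => A x * B x + A x * C x + B x * C x + x1 * x2
        + (A x + B x) * x1 + (A x + C x) * x2) u 1 0 = 2 * walsh C u := by
      unfold walsh2 walsh
      rw [Finset.mul_sum]
      exact Finset.sum_congr rfl fun x _ => L10 (A x) (B x) (C x) (∑ i, u i * x i)
    rw [h, abs_mul, hC u, pow_succ]
    norm_num [mul_comm]
  · have h : walsh2 (fun x x1 x2 => A x * B x + A x * C x + B x * C x + x1 * x2
        + (A x + B x) * x1 + (A x + C x) * x2) u 1 1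
        = -2 * walsh (fun x => A x + B x + C x) u := by
      unfold walsh2 walsh
      rw [Finset.mul_sum]
      exact Finset.sum_congr rfl fun x _ => L11 (A x) (B x) (C x) (∑ i, u i * x i)
    rw [h, abs_mul, hABC u, pow_succ]
    norm_num [mul_comm]
end

section
/- (Hodžić et al.'s construction.) Let n be even and A, B, C : F_2^n → F_2 bent functions such that A⊕B⊕C is also bent. Then g : F_2^{n+4} → F_2 defined by g(x, x_{n+1}, x_{n+2}, x_{n+3}, x_{n+4}) = B(x)(x_{n+1}⊕x_{n+2}) ⊕ A(x)(1⊕x_{n+1}⊕x_{n+3}) ⊕ (C(x)⊕x_{n+1})(x_{n+2}⊕x_{n+3}) ⊕ (x_{n+1}⊕x_{n+2})x_{n+4} is bent. -/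
open Finset

lemma bent_inner_sum (u1 u2 u3 u4 a b c s : ZMod 2) :
    ∑ x1 : ZMod 2, ∑ x2 : ZMod 2, ∑ x3 : ZMod 2, ∑ x4 : ZMod 2,
      (-1 : ℤ) ^ ((b * (x1 + x2) + a * (1 + x1 + x3) + (c + x1) * (x2 + x3) + (x1 + x2) * x4
        + s + u1 * x1 + u2 * x2 + u3 * x3 + u4 * x4).val)
    = (-1 : ℤ) ^ ((u2 * u4 + (1 + u4 + u1 + u2) * u3).val) * 4 *
      (-1 : ℤ) ^ ((a * (1 + (u1 + u2 + u3 + u4)) + b * u4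
        + c * (u4 + (u1 + u2 + u3 + u4)) + s).val) := by
  revert u1 u2 u3 u4 a b c s
  decide

theorem stmt12 {n : ℕ} (hn : Even n)
    (A B C : (Fin n → ZMod 2) → ZMod 2)
    (hA : IsBent A) (hB : IsBent B) (hC : IsBent C)
    (hABC : IsBent (fun x => A x + B x + C x)) :
    IsBent4 (fun x x1 x2 x3 x4 => B x * (x1 + x2) + A x * (1 + x1 + x3) + (C x + x1) * (x2 + x3) + (x1 + x2) * x4) := by
  intro u u1 u2 u3 u4
  have key : walsh4 (fun x x1 x2 x3 x4 => B x * (x1 + x2) + A x * (1 + x1 + x3) + (C x + x1) * (x2 + x3) + (x1 + x2) * x4) u u1 u2 u3 u4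
      = (-1 : ℤ) ^ ((u2 * u4 + (1 + u4 + u1 + u2) * u3).val) * 4 *
        walsh (fun x => A x * (1 + (u1 + u2 + u3 + u4)) + B x * u4
          + C x * (u4 + (u1 + u2 + u3 + u4))) u := by
    unfold walsh4 walsh
    rw [Finset.mul_sum]
    refine Finset.sum_congr rfl fun x _ => ?_
    exact bent_inner_sum u1 u2 u3 u4 (A x) (B x) (C x) (∑ i, u i * x i)
  have hf : ∀ d e : ZMod 2,
      |walsh (fun x => A x * (1 + e) + B x * d + C x * (d + e)) u| = 2 ^ (n / 2) := by
    intro d e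
    rcases zmod2_cases d with hd | hd <;> rcases zmod2_cases e with he | he <;> subst hd he
    · have : (fun x => A x * (1 + (0:ZMod 2)) + B x * 0 + C x * (0 + 0)) = A := by
        funext x
        simp
      rw [this]; exact hA u
    · have : (fun x => A x * (1 + (1:ZMod 2)) + B x * 0 + C x * (0 + 1)) = C := by
        funext x
        have h2 : (1 + 1 : ZMod 2) = 0 := by decide
        simp [h2]
      rw [this]; exact hC u
    · have : (fun x => A x * (1 + (0:ZMod 2)) + B x * 1 + C x * (1 + 0))
          = (fun x => A x + B x + C x) := by
        funext x
        simp
      rw [this]; exact hABC u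
    · have : (fun x => A x * (1 + (1:ZMod 2)) + B x * 1 + C x * (1 + 1)) = B := by
        funext x
        have h2 : (1 + 1 : ZMod 2) = 0 := by decide
        simp [h2]
      rw [this]; exact hB u
  rw [key, abs_mul, abs_mul, abs_pow, abs_neg, abs_one, one_pow, one_mul,
    hf u4 (u1 + u2 + u3 + u4)]
  norm_num [pow_succ]
  ring
end

section
/- Let n be even and let A, B, C, and A⊕B⊕C be bent functions on F_2^n such that additionally AB ⊕ AC ⊕ BC is bent. Then each of the three Rothaus-type functions f, f', f'' on F_2^{n+2} is bent, and moreover f ⊕ f' ⊕ f'' is bent, so f, f', f'' again satisfy the hypotheses of Rothaus' construction. -/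
open Finset

lemma neg_one_pow_val_add : ∀ a b : ZMod 2,
    (-1 : ℤ) ^ (a + b).val = (-1) ^ a.val * (-1) ^ b.val := by decide

lemma walsh2_reduce {n : ℕ} (g : (Fin n → ZMod 2) → ZMod 2 → ZMod 2 → ZMod 2)
    (X : (Fin n → ZMod 2) → ZMod 2) (u1 u2 : ZMod 2) (ε : ℤ)
    (h : ∀ x, ∑ x1 : ZMod 2, ∑ x2 : ZMod 2,
        (-1 : ℤ) ^ (g x x1 x2 + u1 * x1 + u2 * x2).val = 2 * ε * (-1 : ℤ) ^ (X x).val)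
    (u : Fin n → ZMod 2) :
    walsh2 g u u1 u2 = 2 * ε * walsh X u := by
  unfold walsh2 walsh
  have e1 : ∀ (x : Fin n → ZMod 2) (x1 x2 : ZMod 2),
      (-1 : ℤ) ^ (g x x1 x2 + (∑ i, u i * x i) + u1 * x1 + u2 * x2).val
      = (-1 : ℤ) ^ (g x x1 x2 + u1 * x1 + u2 * x2).val
        * (-1) ^ (∑ i, u i * x i).val := by
    intro x x1 x2
    rw [← neg_one_pow_val_add]
    congr 1
    ring_nf
  simp_rw [e1, ← Finset.sum_mul, h, neg_one_pow_val_add, Finset.mul_sum]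
  exact Finset.sum_congr rfl fun x _ => by ring

lemma bent2_of {n : ℕ} (g : (Fin n → ZMod 2) → ZMod 2 → ZMod 2 → ZMod 2)
    (h : ∀ u1 u2 : ZMod 2, ∃ ε : ℤ, (ε = 1 ∨ ε = -1) ∧
      ∃ X : (Fin n → ZMod 2) → ZMod 2, IsBent X ∧
        ∀ x, ∑ x1 : ZMod 2, ∑ x2 : ZMod 2,
          (-1 : ℤ) ^ (g x x1 x2 + u1 * x1 + u2 * x2).val = 2 * ε * (-1 : ℤ) ^ (X x).val) :
    IsBent2 g := by
  intro u u1 u2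
  obtain ⟨ε, hε, X, hX, hpt⟩ := h u1 u2
  rw [walsh2_reduce g X u1 u2 ε hpt u, abs_mul]
  have hXu := hX u
  have habs : |(2 : ℤ) * ε| = 2 := by rcases hε with rfl | rfl <;> norm_num
  rw [habs, hXu, pow_succ]
  ring

lemma t1_00 : ∀ a b c : ZMod 2,
    ∑ x1 : ZMod 2, ∑ x2 : ZMod 2,
      (-1 : ℤ) ^ ((a*b + a*c + b*c + x1*x2 + (a + b)*x1 + (a + c)*x2) + (0 : ZMod 2) * x1 + (0 : ZMod 2) * x2).val
      = 2 * (1 : ℤ) * (-1 : ℤ) ^ ((a : ZMod 2)).val := by decide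

lemma t1_01 : ∀ a b c : ZMod 2,
    ∑ x1 : ZMod 2, ∑ x2 : ZMod 2,
      (-1 : ℤ) ^ ((a*b + a*c + b*c + x1*x2 + (a + b)*x1 + (a + c)*x2) + (0 : ZMod 2) * x1 + (1 : ZMod 2) * x2).val
      = 2 * (1 : ℤ) * (-1 : ℤ) ^ ((b : ZMod 2)).val := by decide

lemma t1_10 : ∀ a b c : ZMod 2,
    ∑ x1 : ZMod 2, ∑ x2 : ZMod 2,
      (-1 : ℤ) ^ ((a*b + a*c + b*c + x1*x2 + (a + b)*x1 + (a + c)*x2) + (1 : ZMod 2) * x1 + (0 : ZMod 2) * x2).val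
      = 2 * (1 : ℤ) * (-1 : ℤ) ^ ((c : ZMod 2)).val := by decide

lemma t1_11 : ∀ a b c : ZMod 2,
    ∑ x1 : ZMod 2, ∑ x2 : ZMod 2,
      (-1 : ℤ) ^ ((a*b + a*c + b*c + x1*x2 + (a + b)*x1 + (a + c)*x2) + (1 : ZMod 2) * x1 + (1 : ZMod 2) * x2).val
      = 2 * (-1 : ℤ) * (-1 : ℤ) ^ ((a + b + c : ZMod 2)).val := by decide

lemma t2_00 : ∀ a b c : ZMod 2,
    ∑ x1 : ZMod 2, ∑ x2 : ZMod 2,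
      (-1 : ℤ) ^ ((a*b + a*c + b*c + x1*x2 + (b + c)*x1 + (a + b)*x2) + (0 : ZMod 2) * x1 + (0 : ZMod 2) * x2).val
      = 2 * (1 : ℤ) * (-1 : ℤ) ^ ((b : ZMod 2)).val := by decide

lemma t2_01 : ∀ a b c : ZMod 2,
    ∑ x1 : ZMod 2, ∑ x2 : ZMod 2,
      (-1 : ℤ) ^ ((a*b + a*c + b*c + x1*x2 + (b + c)*x1 + (a + b)*x2) + (0 : ZMod 2) * x1 + (1 : ZMod 2) * x2).val
      = 2 * (1 : ℤ) * (-1 : ℤ) ^ ((c : ZMod 2)).val := by decide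

lemma t2_10 : ∀ a b c : ZMod 2,
    ∑ x1 : ZMod 2, ∑ x2 : ZMod 2,
      (-1 : ℤ) ^ ((a*b + a*c + b*c + x1*x2 + (b + c)*x1 + (a + b)*x2) + (1 : ZMod 2) * x1 + (0 : ZMod 2) * x2).val
      = 2 * (1 : ℤ) * (-1 : ℤ) ^ ((a : ZMod 2)).val := by decide

lemma t2_11 : ∀ a b c : ZMod 2,
    ∑ x1 : ZMod 2, ∑ x2 : ZMod 2,
      (-1 : ℤ) ^ ((a*b + a*c + b*c + x1*x2 + (b + c)*x1 + (a + b)*x2) + (1 : ZMod 2) * x1 + (1 : ZMod 2) * x2).val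
      = 2 * (-1 : ℤ) * (-1 : ℤ) ^ ((a + b + c : ZMod 2)).val := by decide

lemma t3_00 : ∀ a b c : ZMod 2,
    ∑ x1 : ZMod 2, ∑ x2 : ZMod 2,
      (-1 : ℤ) ^ ((a*b + a*c + b*c + x1*x2 + (a + c)*x1 + (b + c)*x2) + (0 : ZMod 2) * x1 + (0 : ZMod 2) * x2).val
      = 2 * (1 : ℤ) * (-1 : ℤ) ^ ((c : ZMod 2)).val := by decide

lemma t3_01 : ∀ a b c : ZMod 2,
    ∑ x1 : ZMod 2, ∑ x2 : ZMod 2,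
      (-1 : ℤ) ^ ((a*b + a*c + b*c + x1*x2 + (a + c)*x1 + (b + c)*x2) + (0 : ZMod 2) * x1 + (1 : ZMod 2) * x2).val
      = 2 * (1 : ℤ) * (-1 : ℤ) ^ ((a : ZMod 2)).val := by decide

lemma t3_10 : ∀ a b c : ZMod 2,
    ∑ x1 : ZMod 2, ∑ x2 : ZMod 2,
      (-1 : ℤ) ^ ((a*b + a*c + b*c + x1*x2 + (a + c)*x1 + (b + c)*x2) + (1 : ZMod 2) * x1 + (0 : ZMod 2) * x2).val
      = 2 * (1 : ℤ) * (-1 : ℤ) ^ ((b : ZMod 2)).val := by decide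

lemma t3_11 : ∀ a b c : ZMod 2,
    ∑ x1 : ZMod 2, ∑ x2 : ZMod 2,
      (-1 : ℤ) ^ ((a*b + a*c + b*c + x1*x2 + (a + c)*x1 + (b + c)*x2) + (1 : ZMod 2) * x1 + (1 : ZMod 2) * x2).val
      = 2 * (-1 : ℤ) * (-1 : ℤ) ^ ((a + b + c : ZMod 2)).val := by decide

lemma t4_00 : ∀ a b c : ZMod 2,
    ∑ x1 : ZMod 2, ∑ x2 : ZMod 2,
      (-1 : ℤ) ^ (((a*b + a*c + b*c + x1*x2 + (a + b)*x1 + (a + c)*x2) + (a*b + a*c + b*c + x1*x2 + (b + c)*x1 + (a + b)*x2) + (a*b + a*c + b*c + x1*x2 + (a + c)*x1 + (b + c)*x2)) + (0 : ZMod 2) * x1 + (0 : ZMod 2) * x2).val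
      = 2 * (1 : ℤ) * (-1 : ℤ) ^ ((a*b+a*c+b*c : ZMod 2)).val := by decide

lemma t4_01 : ∀ a b c : ZMod 2,
    ∑ x1 : ZMod 2, ∑ x2 : ZMod 2,
      (-1 : ℤ) ^ (((a*b + a*c + b*c + x1*x2 + (a + b)*x1 + (a + c)*x2) + (a*b + a*c + b*c + x1*x2 + (b + c)*x1 + (a + b)*x2) + (a*b + a*c + b*c + x1*x2 + (a + c)*x1 + (b + c)*x2)) + (0 : ZMod 2) * x1 + (1 : ZMod 2) * x2).val
      = 2 * (1 : ℤ) * (-1 : ℤ) ^ ((a*b+a*c+b*c : ZMod 2)).val := by decide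

lemma t4_10 : ∀ a b c : ZMod 2,
    ∑ x1 : ZMod 2, ∑ x2 : ZMod 2,
      (-1 : ℤ) ^ (((a*b + a*c + b*c + x1*x2 + (a + b)*x1 + (a + c)*x2) + (a*b + a*c + b*c + x1*x2 + (b + c)*x1 + (a + b)*x2) + (a*b + a*c + b*c + x1*x2 + (a + c)*x1 + (b + c)*x2)) + (1 : ZMod 2) * x1 + (0 : ZMod 2) * x2).val
      = 2 * (1 : ℤ) * (-1 : ℤ) ^ ((a*b+a*c+b*c : ZMod 2)).val := by decide

lemma t4_11 : ∀ a b c : ZMod 2,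
    ∑ x1 : ZMod 2, ∑ x2 : ZMod 2,
      (-1 : ℤ) ^ (((a*b + a*c + b*c + x1*x2 + (a + b)*x1 + (a + c)*x2) + (a*b + a*c + b*c + x1*x2 + (b + c)*x1 + (a + b)*x2) + (a*b + a*c + b*c + x1*x2 + (a + c)*x1 + (b + c)*x2)) + (1 : ZMod 2) * x1 + (1 : ZMod 2) * x2).val
      = 2 * (-1 : ℤ) * (-1 : ℤ) ^ ((a*b+a*c+b*c : ZMod 2)).val := by decide

theorem stmt16 {n : ℕ} (hn : Even n)
    (A B C : (Fin n → ZMod 2) → ZMod 2)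
    (hA : IsBent A) (hB : IsBent B) (hC : IsBent C)
    (hABC : IsBent (fun x => A x + B x + C x))
    (hD : IsBent (fun x => A x * B x + A x * C x + B x * C x)) :
    IsBent2 (fun x x1 x2 => A x * B x + A x * C x + B x * C x + x1 * x2 + (A x + B x) * x1 + (A x + C x) * x2) ∧
    IsBent2 (fun x x1 x2 => A x * B x + A x * C x + B x * C x + x1 * x2 + (B x + C x) * x1 + (A x + B x) * x2) ∧
    IsBent2 (fun x x1 x2 => A x * B x + A x * C x + B x * C x + x1 * x2 + (A x + C x) * x1 + (B x + C x) * x2) ∧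
    IsBent2 (fun x x1 x2 => (A x * B x + A x * C x + B x * C x + x1 * x2 + (A x + B x) * x1 + (A x + C x) * x2) + (A x * B x + A x * C x + B x * C x + x1 * x2 + (B x + C x) * x1 + (A x + B x) * x2) + (A x * B x + A x * C x + B x * C x + x1 * x2 + (A x + C x) * x1 + (B x + C x) * x2)) := by
  have h2 : ∀ a : ZMod 2, a = 0 ∨ a = 1 := by decide
  refine ⟨?_, ?_, ?_, ?_⟩
  · apply bent2_of
    intro u1 u2
    rcases h2 u1 with rfl | rfl <;> rcases h2 u2 with rfl | rfl
    · exact ⟨1, Or.inl rfl, A, hA, fun x => t1_00 (A x) (B x) (C x)⟩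
    · exact ⟨1, Or.inl rfl, B, hB, fun x => t1_01 (A x) (B x) (C x)⟩
    · exact ⟨1, Or.inl rfl, C, hC, fun x => t1_10 (A x) (B x) (C x)⟩
    · exact ⟨-1, Or.inr rfl, (fun x => A x + B x + C x), hABC, fun x => t1_11 (A x) (B x) (C x)⟩
  · apply bent2_of
    intro u1 u2
    rcases h2 u1 with rfl | rfl <;> rcases h2 u2 with rfl | rfl
    · exact ⟨1, Or.inl rfl, B, hB, fun x => t2_00 (A x) (B x) (C x)⟩
    · exact ⟨1, Or.inl rfl, C, hC, fun x => t2_01 (A x) (B x) (C x)⟩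
    · exact ⟨1, Or.inl rfl, A, hA, fun x => t2_10 (A x) (B x) (C x)⟩
    · exact ⟨-1, Or.inr rfl, (fun x => A x + B x + C x), hABC, fun x => t2_11 (A x) (B x) (C x)⟩
  · apply bent2_of
    intro u1 u2
    rcases h2 u1 with rfl | rfl <;> rcases h2 u2 with rfl | rfl
    · exact ⟨1, Or.inl rfl, C, hC, fun x => t3_00 (A x) (B x) (C x)⟩
    · exact ⟨1, Or.inl rfl, A, hA, fun x => t3_01 (A x) (B x) (C x)⟩
    · exact ⟨1, Or.inl rfl, B, hB, fun x => t3_10 (A x) (B x) (C x)⟩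
    · exact ⟨-1, Or.inr rfl, (fun x => A x + B x + C x), hABC, fun x => t3_11 (A x) (B x) (C x)⟩
  · apply bent2_of
    intro u1 u2
    rcases h2 u1 with rfl | rfl <;> rcases h2 u2 with rfl | rfl
    · exact ⟨1, Or.inl rfl, (fun x => A x * B x + A x * C x + B x * C x), hD, fun x => t4_00 (A x) (B x) (C x)⟩
    · exact ⟨1, Or.inl rfl, (fun x => A x * B x + A x * C x + B x * C x), hD, fun x => t4_01 (A x) (B x) (C x)⟩
    · exact ⟨1, Or.inl rfl, (fun x => A x * B x + A x * C x + B x * C x), hD, fun x => t4_10 (A x) (B x) (C x)⟩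
    · exact ⟨-1, Or.inr rfl, (fun x => A x * B x + A x * C x + B x * C x), hD, fun x => t4_11 (A x) (B x) (C x)⟩
end

section
/- Let F : F_2^{n} → F_2 be expressed as a concatenation over the two extra variables: F(x, y_1, y_2) equals D(x) if (y_1,y_2)=(0,0) and equals E(x), E(x), E(x)⊕1 respectively on the other three cofaces, i.e., F(x,y_1,y_2) = D(x) ⊕ y_1y_2 ⊕ (y_1 ⊕ y_2 ⊕ y_1y_2)(D(x)⊕E(x)). Then F is bent on F_2^{n+2} (n even) if and only if D = E and D is bent. -/
open Finset

def chi (a : ZMod 2) : ℤ := (-1) ^ a.val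

lemma chi_add : ∀ a b : ZMod 2, chi (a + b) = chi a * chi b := by decide

lemma chi_zero : chi 0 = 1 := rfl

lemma chi_sum {ι : Type*} (s : Finset ι) (f : ι → ZMod 2) :
    chi (∑ i ∈ s, f i) = ∏ i ∈ s, chi (f i) := by
  induction s using Finset.cons_induction with
  | empty => simp [chi]
  | cons a s h ih => rw [Finset.sum_cons, Finset.prod_cons, chi_add, ih]

lemma sum_chi_mul (c : ZMod 2) : ∑ a : ZMod 2, chi (c * a) = if c = 0 then 2 else 0 := by
  revert c; decide

lemma orth {n : ℕ} (z : Fin n → ZMod 2) :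
    ∑ u : Fin n → ZMod 2, chi (∑ i, u i * z i) = if z = 0 then 2 ^ n else 0 := by
  have h1 : ∀ u : Fin n → ZMod 2, chi (∑ i, u i * z i) = ∏ i, chi (z i * u i) := by
    intro u
    rw [chi_sum]
    exact Finset.prod_congr rfl fun i _ => by rw [mul_comm]
  calc ∑ u : Fin n → ZMod 2, chi (∑ i, u i * z i)
      = ∑ u : Fin n → ZMod 2, ∏ i, chi (z i * u i) := Finset.sum_congr rfl fun u _ => h1 u
    _ = ∏ i, ∑ a : ZMod 2, chi (z i * a) := by
        rw [← Fintype.piFinset_univ]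
        exact (Finset.prod_univ_sum (fun _ : Fin n => (univ : Finset (ZMod 2))) (fun i a => chi (z i * a))).symm
    _ = ∏ i : Fin n, (if z i = 0 then (2:ℤ) else 0) :=
        Finset.prod_congr rfl fun i _ => sum_chi_mul (z i)
    _ = if z = 0 then 2 ^ n else 0 := by
        by_cases hz : z = 0
        · simp [hz]
        · rw [if_neg hz]
          obtain ⟨i, hi⟩ := Function.ne_iff.mp hz
          exact Finset.prod_eq_zero (Finset.mem_univ i) (by simpa using hi)


lemma zmod2_add_eq_zero : ∀ a b : ZMod 2, (a + b = 0 ↔ a = b) := by decide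

lemma split_sum {n : ℕ} (h : (Fin n → ZMod 2) → (Fin n → ZMod 2) → ZMod 2)
    (x : Fin n → ZMod 2) :
    ∑ y : Fin n → ZMod 2, chi (h x y) * (if (fun i => y i + x i) = 0 then (2:ℤ)^n else 0)
      = chi (h x x) * 2 ^ n := by
  have : ∀ y : Fin n → ZMod 2, ((fun i => y i + x i) = 0) ↔ y = x := by
    intro y
    constructor
    · intro hy; funext i
      exact (zmod2_add_eq_zero _ _).mp (congrFun hy i)
    · rintro rfl; funext i; exact (zmod2_add_eq_zero _ _).mpr rfl
  rw [Finset.sum_congr rfl fun y _ => by rw [if_congr (this y) rfl rfl]]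
  simp [mul_ite]

lemma inversion {n : ℕ} (g : (Fin n → ZMod 2) → ZMod 2) (x : Fin n → ZMod 2) :
    ∑ u : Fin n → ZMod 2, walsh g u * chi (∑ i, u i * x i) = 2 ^ n * chi (g x) := by
  have key : ∀ u : Fin n → ZMod 2, walsh g u * chi (∑ i, u i * x i) =
      ∑ y : Fin n → ZMod 2, chi (g y) * chi (∑ i, u i * (y i + x i)) := by
    intro u
    rw [show walsh g u = ∑ y : Fin n → ZMod 2, chi (g y + ∑ i, u i * y i) from rfl,
      Finset.sum_mul]
    refine Finset.sum_congr rfl fun y _ => ?_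
    rw [chi_add, mul_assoc, ← chi_add]
    congr 2
    rw [← Finset.sum_add_distrib]
    exact Finset.sum_congr rfl fun i _ => (mul_add _ _ _).symm
  rw [Finset.sum_congr rfl fun u _ => key u, Finset.sum_comm]
  rw [Finset.sum_congr rfl fun y _ => (by rw [← Finset.mul_sum, orth] :
    (∑ u : Fin n → ZMod 2, chi (g y) * chi (∑ i, u i * (y i + x i)))
      = chi (g y) * (if (fun i => y i + x i) = 0 then (2:ℤ)^n else 0))]
  rw [split_sum (fun _ y => g y) x, mul_comm]

lemma parseval {n : ℕ} (g : (Fin n → ZMod 2) → ZMod 2) :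
    ∑ u : Fin n → ZMod 2, walsh g u ^ 2 = 2 ^ n * 2 ^ n := by
  have key : ∀ u : Fin n → ZMod 2, walsh g u ^ 2 =
      ∑ y : Fin n → ZMod 2, ∑ z : Fin n → ZMod 2,
        chi (g y + g z) * chi (∑ i, u i * (z i + y i)) := by
    intro u
    rw [sq, show walsh g u = ∑ y : Fin n → ZMod 2, chi (g y + ∑ i, u i * y i) from rfl,
      Finset.sum_mul_sum]
    refine Finset.sum_congr rfl fun y _ => Finset.sum_congr rfl fun z _ => ?_
    rw [← chi_add, ← chi_add]
    congr 1
    rw [show (∑ i, u i * (z i + y i)) = (∑ i, u i * z i) + ∑ i, u i * y i by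
      rw [← Finset.sum_add_distrib]; exact Finset.sum_congr rfl fun i _ => mul_add _ _ _]
    ring
  rw [Finset.sum_congr rfl fun u _ => key u, Finset.sum_comm]
  rw [Finset.sum_congr rfl fun y _ => Finset.sum_comm]
  rw [Finset.sum_congr rfl fun y _ => Finset.sum_congr rfl fun z _ => (by
    rw [← Finset.mul_sum, orth] :
    (∑ u : Fin n → ZMod 2, chi (g y + g z) * chi (∑ i, u i * (z i + y i)))
      = chi (g y + g z) * (if (fun i => z i + y i) = 0 then (2:ℤ)^n else 0))]
  rw [Finset.sum_congr rfl fun y _ => split_sum (fun y z => g y + g z) y]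
  have h1 : ∀ a : ZMod 2, chi (a + a) = 1 := by decide
  simp only [h1, one_mul]
  rw [Finset.sum_const, Finset.card_univ]
  simp [Fintype.card_fun, ZMod.card, nsmul_eq_mul]

lemma key2 : ∀ a b S u1 u2 : ZMod 2,
    (∑ x1 : ZMod 2, ∑ x2 : ZMod 2,
      (-1:ℤ) ^ (a + x1 * x2 + (x1 + x2 + x1 * x2) * (a + b) + S + u1 * x1 + u2 * x2).val)
      = chi (a + S) + (chi u1 + chi u2 - chi u1 * chi u2) * chi (b + S) := by decide

lemma walsh2_eq {n : ℕ} (D E : (Fin n → ZMod 2) → ZMod 2) (u : Fin n → ZMod 2)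
    (u1 u2 : ZMod 2) :
    walsh2 (fun x y1 y2 => D x + y1 * y2 + (y1 + y2 + y1 * y2) * (D x + E x)) u u1 u2
      = walsh D u + (chi u1 + chi u2 - chi u1 * chi u2) * walsh E u := by
  unfold walsh2
  rw [Finset.sum_congr rfl fun x _ => key2 (D x) (E x) (∑ i, u i * x i) u1 u2]
  rw [Finset.sum_add_distrib, ← Finset.mul_sum]
  rfl

theorem stmt18 {n : ℕ} (hn : Even n)
    (D E : (Fin n → ZMod 2) → ZMod 2) :
    IsBent2 (fun x y1 y2 => D x + y1 * y2 + (y1 + y2 + y1 * y2) * (D x + E x)) ↔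
      (D = E ∧ IsBent D) := by
  have hpow : (2:ℤ) ^ (n / 2) * 2 ^ (n / 2) = 2 ^ n := by
    rw [← pow_add]; congr 1; obtain ⟨k, hk⟩ := hn; omega
  have hMpos : (0:ℤ) < 2 ^ (n / 2) := by positivity
  constructor
  · intro h
    have h1 : ∀ u, |walsh D u + walsh E u| = 2 ^ (n / 2 + 1) := by
      intro u
      have := h u 0 0
      rw [walsh2_eq] at this
      have c0 : chi 0 = 1 := rfl
      rw [c0] at this
      rw [show walsh D u + (1 + 1 - 1 * 1) * walsh E u = walsh D u + walsh E u by ring] at this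
      exact this
    have h2 : ∀ u, |walsh D u - 3 * walsh E u| = 2 ^ (n / 2 + 1) := by
      intro u
      have := h u 1 1
      rw [walsh2_eq] at this
      have c1 : chi 1 = -1 := rfl
      rw [c1] at this
      rw [show walsh D u + (-1 + -1 - -1 * -1) * walsh E u = walsh D u - 3 * walsh E u
        by ring] at this
      exact this
    have hcase : ∀ u, walsh E u = 0 ∨ walsh D u = walsh E u := by
      intro u
      have e1 := h1 u
      have e2 := h2 u
      have hsq : (walsh D u + walsh E u) ^ 2 = (walsh D u - 3 * walsh E u) ^ 2 := by
        rw [← sq_abs, ← sq_abs (walsh D u - 3 * walsh E u), e1, e2]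
      have h8 : 8 * (walsh E u * (walsh E u - walsh D u)) = 0 := by linear_combination -hsq
      have h8' : walsh E u * (walsh E u - walsh D u) = 0 := by linarith
      rcases mul_eq_zero.mp h8' with hb | hba
      · exact Or.inl hb
      · exact Or.inr (by linarith [sub_eq_zero.mp hba])
    have hsq_le : ∀ u, walsh E u ^ 2 ≤ 2 ^ n := by
      intro u
      rcases hcase u with hb | hab
      · rw [hb]; positivity
      · have e1 := h1 u
        rw [hab, show walsh E u + walsh E u = 2 * walsh E u by ring, abs_mul] at e1
        have habs : |walsh E u| = 2 ^ (n / 2) := by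
          rw [show |(2:ℤ)| = 2 by norm_num] at e1
          rw [pow_succ] at e1
          linarith
        exact le_of_eq (by rw [← sq_abs, habs, sq, hpow])
    have hsum : ∑ u : Fin n → ZMod 2, walsh E u ^ 2
        = ∑ _u : Fin n → ZMod 2, (2:ℤ) ^ n := by
      rw [parseval, Finset.sum_const, Finset.card_univ]
      simp [Fintype.card_fun, ZMod.card, nsmul_eq_mul]
    have hsq : ∀ u, walsh E u ^ 2 = 2 ^ n := by
      by_contra hc
      push_neg at hc
      obtain ⟨u0, hu0⟩ := hc
      have hlt : ∑ u : Fin n → ZMod 2, walsh E u ^ 2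
          < ∑ _u : Fin n → ZMod 2, (2:ℤ) ^ n :=
        Finset.sum_lt_sum (fun u _ => hsq_le u)
          ⟨u0, Finset.mem_univ u0, lt_of_le_of_ne (hsq_le u0) hu0⟩
      rw [hsum] at hlt
      exact lt_irrefl _ hlt
    have hDE : ∀ u, walsh D u = walsh E u := by
      intro u
      rcases hcase u with hb | hab
      · exfalso
        have := hsq u
        rw [hb] at this
        have h2n : (0:ℤ) < 2 ^ n := by positivity
        simp at this
        linarith
      · exact hab
    have hEbent : IsBent E := by
      intro u
      have hs := hsq u
      have : |walsh E u| ^ 2 = (2 ^ (n / 2) : ℤ) ^ 2 := by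
        rw [sq_abs, hs, sq, hpow]
      have habs : |(|walsh E u|)| = |(2 ^ (n / 2) : ℤ)| := (sq_eq_sq_iff_abs_eq_abs _ _).mp this
      rwa [abs_abs, abs_of_pos hMpos] at habs
    refine ⟨funext fun x => ?_, fun u => by rw [hDE u]; exact hEbent u⟩
    have hx : (2:ℤ) ^ n * chi (D x) = 2 ^ n * chi (E x) := by
      rw [← inversion D x, ← inversion E x]
      exact Finset.sum_congr rfl fun u _ => by rw [hDE u]
    have h2n : ((2:ℤ) ^ n) ≠ 0 := by positivity
    have hchi : chi (D x) = chi (E x) := mul_left_cancel₀ h2n hx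
    have hinj : ∀ a b : ZMod 2, chi a = chi b → a = b := by decide
    exact hinj _ _ hchi
  · rintro ⟨rfl, hD⟩
    intro u u1 u2
    rw [walsh2_eq]
    rw [show walsh D u + (chi u1 + chi u2 - chi u1 * chi u2) * walsh D u
      = (1 + (chi u1 + chi u2 - chi u1 * chi u2)) * walsh D u by ring]
    rw [abs_mul, hD u]
    have hc : ∀ v1 v2 : ZMod 2, |1 + (chi v1 + chi v2 - chi v1 * chi v2)| = 2 := by decide
    rw [hc u1 u2, pow_succ]
    ring
end
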